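/- Suppose (x*, y*) is a saddle-point of f. Then for every k ∈ ℕ: f(x̂_k, ŷ_k) − f(x*, y*) ≤ (1/(k+1)) ∑_{i=0}^{k} (1/(2τ_i))(‖x* − x^i‖² − ‖x* − x^{i+1}‖² − ‖x^i − x^{i+1}‖²) + (1/(k+1)) ∑_{i=0}^{k} (1/(2σ_i))(‖ŷ_k − y^i‖² − ‖ŷ_k − y^{i+1}‖² − ‖y^i − y^{i+1}‖²) + (1/(k+1)) ∑_{i=0}^{k} ( f(x^{i+1}, ŷ_k) − f(x̄^i, ŷ_k) + f(x̄^i, y^{i+1}) − f(x*, y^{i+1}) − f(x^{i+1}, ȳ^{i+1}) + f(x*, ȳ^{i+1}) ). -/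
import Mathlib


open RealInnerProductSpace

/-- Proposition 3.8(i): upper bound for `f(x̂ₖ, ŷₖ) − f(x*, y*)`. -/
theorem stmt_7
    {H₁ : Type*} [NormedAddCommGroup H₁] [InnerProductSpace ℝ H₁] [CompleteSpace H₁]
    {H₂ : Type*} [NormedAddCommGroup H₂] [InnerProductSpace ℝ H₂] [CompleteSpace H₂]
    (X : Set H₁) (Y : Set H₂)
    (hXne : X.Nonempty) (hXcl : IsClosed X) (hXcv : Convex ℝ X)
    (hYne : Y.Nonempty) (hYcl : IsClosed Y) (hYcv : Convex ℝ Y)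
    (f : H₁ → H₂ → ℝ)
    (hfcvx : ∀ y ∈ Y, ConvexOn ℝ X (fun x => f x y))
    (hfccv : ∀ x ∈ X, ConcaveOn ℝ Y (fun y => f x y))
    (xs : ℕ → H₁) (ys : ℕ → H₂) (hxX : ∀ k, xs k ∈ X) (hyY : ∀ k, ys k ∈ Y)
    (xbs : ℕ → H₁) (ybs : ℕ → H₂)
    (τs σs : ℕ → ℝ) (hτ : ∀ k, 0 < τs k) (hσ : ∀ k, 0 < σs k)
    (hA : ∀ k, ∀ y ∈ Y,
      (1/(2*σs k)) * (‖ys k - ys (k+1)‖^2 + ‖y - ys (k+1)‖^2 - ‖y - ys k‖^2)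
        + f (xbs k) y - f (xbs k) (ys (k+1)) ≤ 0)
    (hB : ∀ k, ∀ x ∈ X,
      (1/(2*τs k)) * (‖xs k - xs (k+1)‖^2 + ‖x - xs (k+1)‖^2 - ‖x - xs k‖^2)
        + f (xs (k+1)) (ybs (k+1)) - f x (ybs (k+1)) ≤ 0)
    (xstar : H₁) (ystar : H₂) (hxstar : xstar ∈ X) (hystar : ystar ∈ Y)
    (hsaddle : ∀ x ∈ X, ∀ y ∈ Y, f xstar y ≤ f xstar ystar ∧ f xstar ystar ≤ f x ystar)
    (k : ℕ)
    (xhat : H₁) (yhat : H₂)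
    (hxhat : xhat = (((k : ℝ)+1)⁻¹) • ∑ i ∈ Finset.range (k+1), xs (i+1))
    (hyhat : yhat = (((k : ℝ)+1)⁻¹) • ∑ i ∈ Finset.range (k+1), ys (i+1)) :
    f xhat yhat - f xstar ystar
    ≤ (((k : ℝ)+1)⁻¹) * ∑ i ∈ Finset.range (k+1),
        (1/(2*τs i)) * (‖xstar - xs i‖^2 - ‖xstar - xs (i+1)‖^2 - ‖xs i - xs (i+1)‖^2)
      + (((k : ℝ)+1)⁻¹) * ∑ i ∈ Finset.range (k+1),
        (1/(2*σs i)) * (‖yhat - ys i‖^2 - ‖yhat - ys (i+1)‖^2 - ‖ys i - ys (i+1)‖^2)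
      + (((k : ℝ)+1)⁻¹) * ∑ i ∈ Finset.range (k+1),
        (f (xs (i+1)) yhat - f (xbs i) yhat + f (xbs i) (ys (i+1)) - f xstar (ys (i+1))
          - f (xs (i+1)) (ybs (i+1)) + f xstar (ybs (i+1))) := by
  have hwpos : (0:ℝ) ≤ ((k:ℝ)+1)⁻¹ := by positivity
  have hw1 : ∑ i ∈ Finset.range (k+1), (((k:ℝ)+1)⁻¹) = 1 := by
    rw [Finset.sum_const, Finset.card_range, nsmul_eq_mul]
    push_cast
    field_simp
  have hyhatY : yhat ∈ Y := by
    rw [hyhat, Finset.smul_sum]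
    exact hYcv.sum_mem (fun i _ => hwpos) hw1 (fun i _ => hyY (i+1))
  have hJx : f xhat yhat
      ≤ ∑ i ∈ Finset.range (k+1), (((k:ℝ)+1)⁻¹) * f (xs (i+1)) yhat := by
    have h := (hfcvx yhat hyhatY).map_sum_le (fun i _ => hwpos) hw1
      (fun i _ => hxX (i+1))
    rw [hxhat, Finset.smul_sum]
    exact h
  have hJy : ∑ i ∈ Finset.range (k+1), (((k:ℝ)+1)⁻¹) * f xstar (ys (i+1))
      ≤ f xstar yhat := by
    have h := (hfccv xstar hxstar).le_map_sum (fun i _ => hwpos) hw1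
      (fun i _ => hyY (i+1))
    rw [hyhat, Finset.smul_sum]
    exact h
  have hsad : f xstar yhat ≤ f xstar ystar := (hsaddle xstar hxstar yhat hyhatY).1
  have hsum : ∑ i ∈ Finset.range (k+1),
        (((k:ℝ)+1)⁻¹) * (f (xs (i+1)) yhat - f xstar (ys (i+1)))
      ≤ ∑ i ∈ Finset.range (k+1), (((k:ℝ)+1)⁻¹) *
        ((1/(2*τs i)) * (‖xstar - xs i‖^2 - ‖xstar - xs (i+1)‖^2 - ‖xs i - xs (i+1)‖^2)
        + (1/(2*σs i)) * (‖yhat - ys i‖^2 - ‖yhat - ys (i+1)‖^2 - ‖ys i - ys (i+1)‖^2)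
        + (f (xs (i+1)) yhat - f (xbs i) yhat + f (xbs i) (ys (i+1)) - f xstar (ys (i+1))
          - f (xs (i+1)) (ybs (i+1)) + f xstar (ybs (i+1)))) := by
    refine Finset.sum_le_sum fun i _ => mul_le_mul_of_nonneg_left ?_ hwpos
    have h1 := hA i yhat hyhatY
    have h2 := hB i xstar hxstar
    nlinarith [h1, h2]
  calc f xhat yhat - f xstar ystar
      ≤ ∑ i ∈ Finset.range (k+1),
          (((k:ℝ)+1)⁻¹) * (f (xs (i+1)) yhat - f xstar (ys (i+1))) := by
        have : ∑ i ∈ Finset.range (k+1),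
            (((k:ℝ)+1)⁻¹) * (f (xs (i+1)) yhat - f xstar (ys (i+1)))
            = ∑ i ∈ Finset.range (k+1), (((k:ℝ)+1)⁻¹) * f (xs (i+1)) yhat
              - ∑ i ∈ Finset.range (k+1), (((k:ℝ)+1)⁻¹) * f xstar (ys (i+1)) := by
          rw [← Finset.sum_sub_distrib]
          exact Finset.sum_congr rfl fun i _ => by ring
        linarith [hJx, hJy, hsad]
    _ ≤ _ := hsum
    _ = _ := by
        rw [Finset.mul_sum, Finset.mul_sum, Finset.mul_sum,
          ← Finset.sum_add_distrib, ← Finset.sum_add_distrib]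
        exact Finset.sum_congr rfl fun i _ => by ring
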